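/- Let τ̃(c) = (α_J c, 0, ..., 0, −α_1 c) ∈ ℝ^J for c > 0 and α ∈ ℝ_+^J. Then for every θ ∈ ℝ, as c → ∞, the GPCM probabilities satisfy π_J(θ, τ̃(c), α) → exp(A_J θ)/(1 + exp(A_J θ)), π_0(θ, τ̃(c), α) → 1/(1 + exp(A_J θ)), and π_j(θ, τ̃(c), α) → 0 for 0 < j < J, where A_J = Σ_{s=1}^J α_s. -/

import Mathlib

open Real Filter Finset

noncomputable def gpcmPi (J : ℕ) (α τ : ℕ → ℝ) (θ : ℝ) (j : ℕ) : ℝ :=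
  Real.exp (∑ s ∈ Finset.Icc 1 j, α s * (θ - τ s)) /
    ∑ k ∈ Finset.Icc 0 J, Real.exp (∑ s ∈ Finset.Icc 1 k, α s * (θ - τ s))

/-- The threshold sequence `τ̃(c) = (α_J c, 0, ..., 0, −α_1 c)`. -/
noncomputable def tauTilde (J : ℕ) (α : ℕ → ℝ) (c : ℝ) (s : ℕ) : ℝ :=
  if s = 1 then α J * c else if s = J then -(α 1 * c) else 0

section Aux

variable (J : ℕ) (α : ℕ → ℝ) (θ : ℝ)

lemma tau_sum_mid (hJ : 2 ≤ J) (j : ℕ) (h1 : 1 ≤ j) (hjJ : j < J) (c : ℝ) :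
    ∑ s ∈ Finset.Icc 1 j, α s * (θ - tauTilde J α c s)
      = (∑ s ∈ Finset.Icc 1 j, α s) * θ - α 1 * (α J * c) := by
  have h : ∀ s ∈ Finset.Icc 1 j, α s * (θ - tauTilde J α c s)
      = α s * θ - (if s = 1 then α 1 * (α J * c) else 0) := by
    intro s hs
    simp only [Finset.mem_Icc] at hs
    by_cases h1s : s = 1
    · subst h1s
      simp [tauTilde, (by omega : ¬ (1 = J))]
      ring
    · have hsJ : ¬ s = J := by omega
      simp [tauTilde, h1s, hsJ]
  rw [Finset.sum_congr rfl h, Finset.sum_sub_distrib, ← Finset.sum_mul,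
    Finset.sum_ite_eq' (Finset.Icc 1 j) 1 (fun _ => α 1 * (α J * c))]
  simp [h1]

lemma tau_sum_top (hJ : 2 ≤ J) (c : ℝ) :
    ∑ s ∈ Finset.Icc 1 J, α s * (θ - tauTilde J α c s)
      = (∑ s ∈ Finset.Icc 1 J, α s) * θ := by
  obtain ⟨m, rfl⟩ : ∃ m, J = m + 2 := ⟨J - 2, by omega⟩
  rw [show m + 2 = (m + 1) + 1 from rfl,
    Finset.sum_Icc_succ_top (by omega : 1 ≤ m + 1 + 1),
    Finset.sum_Icc_succ_top (by omega : 1 ≤ m + 1 + 1) (fun s => α s),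
    tau_sum_mid _ α θ hJ (m + 1) (by omega) (by omega) c]
  have : tauTilde (m + 1 + 1) α c (m + 1 + 1) = -(α 1 * c) := by
    simp [tauTilde, (by omega : ¬ (m + 1 + 1 = 1))]
  rw [this]
  ring

lemma mid_exp_tendsto (hJ : 2 ≤ J) (hα : ∀ s, 0 < α s) (j : ℕ) (h1 : 1 ≤ j) (h2 : j < J) :
    Tendsto (fun c => Real.exp (∑ s ∈ Finset.Icc 1 j, α s * (θ - tauTilde J α c s)))
      atTop (nhds 0) := by
  have heq : (fun c => Real.exp (∑ s ∈ Finset.Icc 1 j, α s * (θ - tauTilde J α c s)))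
      = fun c => Real.exp ((∑ s ∈ Finset.Icc 1 j, α s) * θ - α 1 * (α J * c)) := by
    funext c; rw [tau_sum_mid J α θ hJ j h1 h2 c]
  rw [heq]
  apply Real.tendsto_exp_atBot.comp
  apply Filter.tendsto_atBot_add_const_left
  rw [Filter.tendsto_neg_atBot_iff]
  have hp : (0 : ℝ) < α 1 * α J := mul_pos (hα 1) (hα J)
  simpa [mul_assoc] using (tendsto_id (α := ℝ)).const_mul_atTop hp

lemma denom_tendsto (hJ : 2 ≤ J) (hα : ∀ s, 0 < α s) :
    Tendsto (fun c => ∑ k ∈ Finset.Icc 0 J,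
        Real.exp (∑ s ∈ Finset.Icc 1 k, α s * (θ - tauTilde J α c s)))
      atTop (nhds (1 + Real.exp ((∑ s ∈ Finset.Icc 1 J, α s) * θ))) := by
  obtain ⟨m, hm⟩ : ∃ m, J = m + 2 := ⟨J - 2, by omega⟩
  have hins : Finset.Icc 0 J = insert 0 (Finset.Icc 1 J) := by
    ext x; simp [Finset.mem_Icc]; omega
  have heq : ∀ c, ∑ k ∈ Finset.Icc 0 J,
        Real.exp (∑ s ∈ Finset.Icc 1 k, α s * (θ - tauTilde J α c s))
      = 1 + ((∑ k ∈ Finset.Icc 1 (m + 1),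
          Real.exp (∑ s ∈ Finset.Icc 1 k, α s * (θ - tauTilde J α c s)))
        + Real.exp ((∑ s ∈ Finset.Icc 1 J, α s) * θ)) := by
    intro c
    rw [hins, Finset.sum_insert (by simp)]
    congr 1
    · simp
    · rw [hm, show m + 2 = (m + 1) + 1 from rfl, Finset.sum_Icc_succ_top (by omega : 1 ≤ m + 1 + 1)]
      rw [← hm, tau_sum_top J α θ hJ c]
  simp only [heq]
  have h0 : Tendsto (fun c => ∑ k ∈ Finset.Icc 1 (m + 1),
      Real.exp (∑ s ∈ Finset.Icc 1 k, α s * (θ - tauTilde J α c s))) atTop (nhds 0) := by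
    have := tendsto_finset_sum (Finset.Icc 1 (m + 1))
      (fun k hk => mid_exp_tendsto J α θ hJ hα k
        (by simp [Finset.mem_Icc] at hk; omega) (by simp [Finset.mem_Icc] at hk; omega))
    simpa using this
  have := (tendsto_const_nhds (x := (1:ℝ)) (f := atTop)).add
    (h0.add (tendsto_const_nhds (x := Real.exp ((∑ s ∈ Finset.Icc 1 J, α s) * θ))))
  simpa using this

end Aux

/-- As `c → ∞`, the GPCM probabilities under `τ̃(c)` converge to the 2PL probabilities:
`π_J → e^{A_J θ}/(1+e^{A_J θ})`, `π_0 → 1/(1+e^{A_J θ})`, and `π_j → 0` for `0 < j < J`. -/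
theorem gpcm_tauTilde_limits (J : ℕ) (hJ : 2 ≤ J) (α : ℕ → ℝ) (hα : ∀ s, 0 < α s) (θ : ℝ) :
    Tendsto (fun c => gpcmPi J α (tauTilde J α c) θ J) atTop
      (nhds (Real.exp ((∑ s ∈ Finset.Icc 1 J, α s) * θ)
        / (1 + Real.exp ((∑ s ∈ Finset.Icc 1 J, α s) * θ))))
    ∧ Tendsto (fun c => gpcmPi J α (tauTilde J α c) θ 0) atTop
        (nhds (1 / (1 + Real.exp ((∑ s ∈ Finset.Icc 1 J, α s) * θ))))
    ∧ ∀ j, 0 < j → j < J →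
        Tendsto (fun c => gpcmPi J α (tauTilde J α c) θ j) atTop (nhds 0) := by
  have hD := denom_tendsto J α θ hJ hα
  have hDne : (1 : ℝ) + Real.exp ((∑ s ∈ Finset.Icc 1 J, α s) * θ) ≠ 0 := by positivity
  refine ⟨?_, ?_, ?_⟩
  · have heq : (fun c => gpcmPi J α (tauTilde J α c) θ J)
        = fun c => Real.exp ((∑ s ∈ Finset.Icc 1 J, α s) * θ) /
          ∑ k ∈ Finset.Icc 0 J, Real.exp (∑ s ∈ Finset.Icc 1 k, α s * (θ - tauTilde J α c s)) := by
      funext c; rw [gpcmPi, tau_sum_top J α θ hJ c]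
    rw [heq]
    exact Filter.Tendsto.div tendsto_const_nhds hD hDne
  · have heq : (fun c => gpcmPi J α (tauTilde J α c) θ 0)
        = fun c => 1 /
          ∑ k ∈ Finset.Icc 0 J, Real.exp (∑ s ∈ Finset.Icc 1 k, α s * (θ - tauTilde J α c s)) := by
      funext c; rw [gpcmPi]; simp
    rw [heq]
    exact Filter.Tendsto.div tendsto_const_nhds hD hDne
  · intro j hj1 hj2
    have := Filter.Tendsto.div (mid_exp_tendsto J α θ hJ hα j hj1 hj2) hD hDne
    simpa only [gpcmPi, zero_div, Pi.div_def] using this
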